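/- Let J : [0,∞) → ℝ be nonnegative with J(r) = 0 for r > 1, and let J_δ(|ξ|) = (c/δ⁴)·J(|ξ|/δ) in ℝ². For x ∈ ℝ², 0 < s_x < δ, and a unit vector n, the circular-segment integral ∫_{D_δ} J_δ(|x − y|)·[|(y−x)·p|² − |(y−x̄)·n|² + |(x−x̄)·n|²] dy, where x̄ = x + s_x·n, p ⊥ n is a unit vector, and D_δ = {x + (r cos θ, r sin θ) : s_x < r < δ, |θ| ≤ arccos(s_x/r)} (written in coordinates with n along θ = 0), equals 2∫_{s_x}^{δ} J_δ(r)·r²·√(1 − (s_x/r)²)·s_x dr, and in particular is nonnegative. -/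

import Mathlib

open Real MeasureTheory Set
open scoped RealInnerProductSpace ENNReal

lemma seg_slice (sx δ r : ℝ) (hsx : 0 < sx) (hr : r ∈ Set.Ioo sx δ) (θ : ℝ) :
    (sx < r * Real.cos θ ∧ |θ| < π) ↔ |θ| < Real.arccos (sx / r) := by
  have hr0 : 0 < r := hsx.trans hr.1
  have h01 : 0 ≤ sx / r := by positivity
  have h1 : sx / r < 1 := (div_lt_one hr0).mpr hr.1
  have hle2 : Real.arccos (sx / r) ≤ π / 2 := Real.arccos_le_pi_div_two.mpr h01
  have hcosA : Real.cos (Real.arccos (sx / r)) = sx / r :=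
    Real.cos_arccos (by linarith) h1.le
  constructor
  · rintro ⟨h2, h3⟩
    by_contra hcon
    push_neg at hcon
    have : Real.cos |θ| ≤ Real.cos (Real.arccos (sx / r)) :=
      Real.cos_le_cos_of_nonneg_of_le_pi (Real.arccos_nonneg _) h3.le hcon
    rw [Real.cos_abs, hcosA] at this
    have : r * Real.cos θ ≤ r * (sx / r) := by nlinarith
    rw [mul_div_cancel₀ _ hr0.ne'] at this
    linarith
  · intro h
    have hθπ : |θ| < π := h.trans_le (hle2.trans (by linarith [Real.pi_pos]))
    refine ⟨?_, hθπ⟩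
    have : Real.cos (Real.arccos (sx / r)) < Real.cos |θ| := by
      apply Real.strictAntiOn_cos ⟨abs_nonneg _, hθπ.le⟩
        ⟨Real.arccos_nonneg _, Real.arccos_le_pi _⟩ h
    rw [Real.cos_abs, hcosA] at this
    calc sx = r * (sx / r) := by field_simp
    _ < r * Real.cos θ := by nlinarith

set_option maxHeartbeats 2000000 in
lemma plane_eq (Jδ : ℝ → ℝ) (sx δ : ℝ) (hsx : 0 < sx) (hsxδ : sx < δ)
    (hJnn : ∀ r, 0 ≤ r → 0 ≤ Jδ r) :
    (∫ q in {q : ℝ × ℝ | Real.sqrt (q.1 ^ 2 + q.2 ^ 2) < δ ∧ sx < q.1},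
        Jδ (Real.sqrt (q.1 ^ 2 + q.2 ^ 2)) * (q.2 ^ 2 - (q.1 - sx) ^ 2 + sx ^ 2)) =
      2 * ∫ r in sx..δ, Jδ r * r ^ 2 * Real.sqrt (1 - (sx / r) ^ 2) * sx := by
  have hδ0 : 0 < δ := hsx.trans hsxδ
  set θ0 : ℝ → ℝ := fun r => Real.arccos (sx / r) with hθ0def
  set S : Set (ℝ × ℝ) :=
    {q | sx < q.1 ∧ q.1 < δ ∧ sx < q.1 * Real.cos q.2 ∧ |q.2| < π} with hSdef
  set f' : ℝ × ℝ → ℝ := fun q =>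
    q.1 * (Jδ q.1 * ((q.1 * Real.sin q.2) ^ 2 - (q.1 * Real.cos q.2 - sx) ^ 2 + sx ^ 2))
    with hf'def
  set h1 : ℝ → ℝ := fun r => Jδ r * r ^ 2 * Real.sqrt (1 - (sx / r) ^ 2) * sx with hh1def
  set D' : Set (ℝ × ℝ) := {q : ℝ × ℝ | Real.sqrt (q.1 ^ 2 + q.2 ^ 2) < δ ∧ sx < q.1}
    with hD'def
  set G : ℝ × ℝ → ℝ := fun q =>
    Jδ (Real.sqrt (q.1 ^ 2 + q.2 ^ 2)) * (q.2 ^ 2 - (q.1 - sx) ^ 2 + sx ^ 2) with hGdef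
  have hSopen : IsOpen S := by
    have : S = ({q : ℝ × ℝ | sx < q.1} ∩ ({q : ℝ × ℝ | q.1 < δ} ∩
        ({q : ℝ × ℝ | sx < q.1 * Real.cos q.2} ∩ {q : ℝ × ℝ | |q.2| < π}))) := by
      ext q; simp [hSdef, and_assoc]
    rw [this]
    exact (isOpen_lt continuous_const continuous_fst).inter
      ((isOpen_lt continuous_fst continuous_const).inter
        ((isOpen_lt continuous_const (continuous_fst.mul (Real.continuous_cos.comp
          continuous_snd))).inter (isOpen_lt (continuous_snd.abs) continuous_const)))
  have hSmeas : MeasurableSet S := hSopen.measurableSet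
  have hD'open : IsOpen D' := by
    have : D' = ({q : ℝ × ℝ | Real.sqrt (q.1 ^ 2 + q.2 ^ 2) < δ} ∩ {q : ℝ × ℝ | sx < q.1}) := by
      ext q; simp [hD'def]
    rw [this]
    exact (isOpen_lt (Real.continuous_sqrt.comp ((continuous_fst.pow 2).add
      (continuous_snd.pow 2))) continuous_const).inter (isOpen_lt continuous_const continuous_fst)
  have hSsub : S ⊆ polarCoord.target := by
    rintro ⟨r, θ⟩ ⟨h1, _, _, h4⟩
    rw [polarCoord_target]
    exact ⟨hsx.trans h1, abs_lt.mp h4⟩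
  have hslice : ∀ r ∈ Set.Ioo sx δ, ∀ θ : ℝ,
      ((r, θ) ∈ S ↔ θ ∈ Set.Ioo (-θ0 r) (θ0 r)) := by
    intro r hr θ
    have := seg_slice sx δ r hsx hr θ
    simp only [hSdef, Set.mem_setOf_eq, Set.mem_Ioo, ← abs_lt]
    constructor
    · rintro ⟨_, _, h3, h4⟩; exact this.mp ⟨h3, h4⟩
    · intro h
      have h' := this.mpr h
      exact ⟨hr.1, hr.2, h'.1, h'.2⟩
  have hsliceE : ∀ r : ℝ, r ∉ Set.Ioo sx δ → ∀ θ : ℝ, (r, θ) ∉ S := by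
    rintro r hr θ ⟨a1, a2, _, _⟩
    exact hr ⟨a1, a2⟩
  have hsq : ∀ r θ : ℝ, 0 < r →
      Real.sqrt ((r * Real.cos θ) ^ 2 + (r * Real.sin θ) ^ 2) = r := by
    intro r θ hr
    have h : (r * Real.cos θ) ^ 2 + (r * Real.sin θ) ^ 2 = r ^ 2 := by
      have := Real.sin_sq_add_cos_sq θ; nlinarith
    rw [h, Real.sqrt_sq hr.le]
  have hsymm : ∀ q : ℝ × ℝ, polarCoord.symm q = (q.1 * Real.cos q.2, q.1 * Real.sin q.2) :=
    fun _ => rfl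
  -- Step A : reduce to an indicator integral over the plane
  have stepA : (∫ q in D', G q) = ∫ q, Set.indicator S f' q := by
    rw [← integral_indicator hD'open.measurableSet,
      ← integral_comp_polarCoord_symm (Set.indicator D' G)]
    have hcong : ∀ q ∈ polarCoord.target,
        q.1 • Set.indicator D' G (polarCoord.symm q) = Set.indicator S f' q := by
      intro q hq
      rw [polarCoord_target] at hq
      obtain ⟨hq1, hq2⟩ := hq
      simp only [Set.mem_Ioi] at hq1
      simp only [Set.mem_Ioo] at hq2
      by_cases hqS : q ∈ S
      · obtain ⟨hs1, hs2, hs3, hs4⟩ := id hqS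
        have hmem : polarCoord.symm q ∈ D' := by
          rw [hsymm]
          simp only [hD'def, Set.mem_setOf_eq]
          refine ⟨?_, hs3⟩
          simpa [hsq q.1 q.2 hq1] using hs2
        rw [Set.indicator_of_mem hmem, Set.indicator_of_mem hqS, hsymm]
        simp only [hGdef, hf'def, smul_eq_mul]
        rw [hsq q.1 q.2 hq1]
      · have hmem : polarCoord.symm q ∉ D' := by
          intro hc
          rw [hsymm] at hc
          simp only [hD'def, Set.mem_setOf_eq] at hc
          obtain ⟨hc1, hc2⟩ := hc
          rw [hsq q.1 q.2 hq1] at hc1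
          refine hqS ⟨?_, hc1, hc2, abs_lt.mpr hq2⟩
          have : q.1 * Real.cos q.2 ≤ q.1 * 1 :=
            mul_le_mul_of_nonneg_left (Real.cos_le_one _) hq1.le
          simpa using hc2.trans_le (by simpa using this)
        rw [Set.indicator_of_notMem hmem, Set.indicator_of_notMem hqS, smul_zero]
    rw [setIntegral_congr_fun polarCoord.open_target.measurableSet hcong,
      ← integral_indicator polarCoord.open_target.measurableSet,
      Set.indicator_indicator, Set.inter_eq_self_of_subset_right hSsub]
  rw [stepA]
  by_cases hI : Integrable (Set.indicator S f') volume
  · have hle : sx ≤ δ := hsxδ.le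
    have hinner : ∀ r : ℝ, (∫ θ, Set.indicator S f' (r, θ)) =
        Set.indicator (Set.Ioo sx δ) (fun r => 2 * h1 r) r := by
      intro r
      by_cases hr : r ∈ Set.Ioo sx δ
      · have hr0 : 0 < r := hsx.trans hr.1
        have h01 : 0 ≤ sx / r := by positivity
        have hlt1 : sx / r < 1 := (div_lt_one hr0).mpr hr.1
        have hcos : Real.cos (θ0 r) = sx / r := Real.cos_arccos (by linarith) hlt1.le
        have hsin : Real.sin (θ0 r) = Real.sqrt (1 - (sx / r) ^ 2) := Real.sin_arccos _
        have hθ0pos : 0 < θ0 r := Real.arccos_pos.mpr hlt1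
        have hfun : (fun θ => Set.indicator S f' (r, θ)) =
            Set.indicator (Set.Ioo (-θ0 r) (θ0 r)) (fun θ => f' (r, θ)) := by
          funext θ
          by_cases hθ : θ ∈ Set.Ioo (-θ0 r) (θ0 r)
          · rw [Set.indicator_of_mem ((hslice r hr θ).mpr hθ), Set.indicator_of_mem hθ]
          · rw [Set.indicator_of_notMem (fun hc => hθ ((hslice r hr θ).mp hc)),
              Set.indicator_of_notMem hθ]
        rw [hfun, integral_indicator measurableSet_Ioo, ← integral_Ioc_eq_integral_Ioo,
          ← intervalIntegral.integral_of_le (by linarith)]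
        have hderiv : ∀ θ ∈ Set.uIcc (-θ0 r) (θ0 r),
            HasDerivAt (fun θ => r * Jδ r * (2 * sx * r * Real.sin θ
              - r ^ 2 * (Real.sin θ * Real.cos θ))) (f' (r, θ)) θ := by
          intro θ _
          have hd1 : HasDerivAt (fun θ => 2 * sx * r * Real.sin θ
              - r ^ 2 * (Real.sin θ * Real.cos θ))
              (2 * sx * r * Real.cos θ - r ^ 2 * (Real.cos θ * Real.cos θ
                + Real.sin θ * -Real.sin θ)) θ :=
            ((Real.hasDerivAt_sin θ).const_mul (2 * sx * r)).sub
              (((Real.hasDerivAt_sin θ).mul (Real.hasDerivAt_cos θ)).const_mul (r ^ 2))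
          have hd2 := hd1.const_mul (r * Jδ r)
          have h3 : f' (r, θ) = r * Jδ r * (2 * sx * r * Real.cos θ
              - r ^ 2 * (Real.cos θ * Real.cos θ + Real.sin θ * -Real.sin θ)) := by
            simp only [hf'def]; ring
          exact h3 ▸ hd2
        have hcont : IntervalIntegrable (fun θ => f' (r, θ)) volume (-θ0 r) (θ0 r) := by
          apply Continuous.intervalIntegrable
          simp only [hf'def]
          fun_prop
        rw [intervalIntegral.integral_eq_sub_of_hasDerivAt hderiv hcont,
          Set.indicator_of_mem hr]
        simp only [Real.sin_neg, Real.cos_neg, hcos, hsin, hh1def]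
        field_simp
        ring
      · have hz : ∀ θ : ℝ, Set.indicator S f' (r, θ) = 0 := fun θ =>
          Set.indicator_of_notMem (hsliceE r hr θ) _
        rw [Set.indicator_of_notMem hr]
        simp [hz]
    calc ∫ q, Set.indicator S f' q
        = ∫ r, ∫ θ, Set.indicator S f' (r, θ) := MeasureTheory.integral_prod _ hI
      _ = ∫ r, Set.indicator (Set.Ioo sx δ) (fun r => 2 * h1 r) r := by
          simp only [hinner]
      _ = 2 * ∫ r in sx..δ, h1 r := by
          rw [integral_indicator measurableSet_Ioo, ← integral_Ioc_eq_integral_Ioo,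
            ← intervalIntegral.integral_of_le hle, intervalIntegral.integral_const_mul]
  · have hle : sx ≤ δ := hsxδ.le
    have hII : ¬ IntervalIntegrable h1 volume sx δ := by
      intro hII
      apply hI
      have hIoo : IntegrableOn h1 (Set.Ioo sx δ) volume :=
        (intervalIntegrable_iff_integrableOn_Ioo_of_le hle).mp hII
      set ψ : ℝ → ℝ := fun r => r ^ 2 * Real.sqrt (1 - (sx / r) ^ 2) * sx with hψdef
      have hψm : Measurable ψ := by fun_prop
      have hψne : ∀ r ∈ Set.Ioo sx δ, ψ r ≠ 0 := by
        intro r hr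
        have hr0 : 0 < r := hsx.trans hr.1
        have hlt1 : sx / r < 1 := (div_lt_one hr0).mpr hr.1
        have h01 : 0 ≤ sx / r := by positivity
        have hsq : 0 < Real.sqrt (1 - (sx / r) ^ 2) := Real.sqrt_pos.mpr (by nlinarith)
        positivity
      have hJae : AEMeasurable Jδ (volume.restrict (Set.Ioo sx δ)) := by
        have h1ae : AEMeasurable h1 (volume.restrict (Set.Ioo sx δ)) := hIoo.aemeasurable
        refine (h1ae.div hψm.aemeasurable).congr ?_
        filter_upwards [ae_restrict_mem measurableSet_Ioo] with r hr
        have he : h1 r = Jδ r * ψ r := by simp only [hh1def, hψdef]; ring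
        show h1 r / ψ r = Jδ r
        rw [he, mul_div_cancel_right₀ _ (hψne r hr)]
      have hSsubP : S ⊆ Set.Ioo sx δ ×ˢ (Set.univ : Set ℝ) := by
        rintro ⟨r, θ⟩ ⟨a1, a2, _, _⟩; exact ⟨⟨a1, a2⟩, trivial⟩
      have hfst : AEMeasurable (fun q : ℝ × ℝ => Jδ q.1) (volume.restrict S) := by
        have h2 : AEMeasurable (fun q : ℝ × ℝ => Jδ q.1)
            ((volume.restrict (Set.Ioo sx δ)).prod volume) := hJae.comp_fst
        have h3 : (volume.restrict (Set.Ioo sx δ)).prod (volume : Measure ℝ)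
            = (volume : Measure (ℝ × ℝ)).restrict (Set.Ioo sx δ ×ˢ Set.univ) := by
          rw [Measure.volume_eq_prod, ← Measure.prod_restrict, Measure.restrict_univ]
        rw [h3] at h2
        exact h2.mono_measure (Measure.restrict_mono hSsubP le_rfl)
      have hw : Measurable (fun q : ℝ × ℝ =>
          (q.1 * Real.sin q.2) ^ 2 - (q.1 * Real.cos q.2 - sx) ^ 2 + sx ^ 2) := by fun_prop
      have haem : AEMeasurable f' (volume.restrict S) := by
        simp only [hf'def]
        exact measurable_fst.aemeasurable.mul (hfst.mul hw.aemeasurable)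
      have haesm : AEStronglyMeasurable (Set.indicator S f') volume := by
        rw [aestronglyMeasurable_indicator_iff hSmeas]
        exact haem.aestronglyMeasurable
      refine ⟨haesm, ?_⟩
      show (∫⁻ q, ‖Set.indicator S f' q‖₊) < ⊤
      set C : ℝ := 3 * π * δ ^ 2 / sx ^ 2 with hCdef
      have hC : (0:ℝ) < C := by rw [hCdef]; positivity
      set B : ℝ × ℝ → ℝ≥0∞ := fun q => ENNReal.ofReal (q.1 * (Jδ q.1 * (3 * δ ^ 2)))
        with hBdef
      have hbound : ∀ q : ℝ × ℝ, (‖Set.indicator S f' q‖₊ : ℝ≥0∞)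
          ≤ Set.indicator S B q := by
        intro q
        by_cases hq : q ∈ S
        · rw [Set.indicator_of_mem hq, Set.indicator_of_mem hq]
          obtain ⟨a1, a2, a3, a4⟩ := hq
          rw [← enorm_eq_nnnorm, ← ofReal_norm]
          apply ENNReal.ofReal_le_ofReal
          have hq10 : 0 < q.1 := hsx.trans a1
          have hJ0 : 0 ≤ Jδ q.1 := hJnn _ hq10.le
          have h1a : q.1 ^ 2 ≤ δ ^ 2 := by nlinarith
          have hsin2 : (q.1 * Real.sin q.2) ^ 2 ≤ δ ^ 2 := by
            nlinarith [Real.sin_sq_le_one q.2, sq_nonneg q.1]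
          have hcosle : q.1 * Real.cos q.2 ≤ q.1 := by nlinarith [Real.cos_le_one q.2]
          have hmid : (q.1 * Real.cos q.2 - sx) ^ 2 ≤ δ ^ 2 := by nlinarith
          have habs : |(q.1 * Real.sin q.2) ^ 2 - (q.1 * Real.cos q.2 - sx) ^ 2 + sx ^ 2|
              ≤ 3 * δ ^ 2 := by
            rw [abs_le]
            constructor <;> nlinarith [sq_nonneg (q.1 * Real.sin q.2),
              sq_nonneg (q.1 * Real.cos q.2 - sx)]
          have hnf : ‖f' q‖ = q.1 * (Jδ q.1
              * |(q.1 * Real.sin q.2) ^ 2 - (q.1 * Real.cos q.2 - sx) ^ 2 + sx ^ 2|) := by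
            simp only [hf'def, Real.norm_eq_abs, abs_mul]
            rw [abs_of_pos hq10, abs_of_nonneg hJ0]
          rw [hnf]
          nlinarith [mul_le_mul_of_nonneg_left habs hJ0]
        · rw [Set.indicator_of_notMem hq, Set.indicator_of_notMem hq]; simp
      have hBae : AEMeasurable (Set.indicator S B) ((volume : Measure ℝ).prod volume) := by
        rw [← Measure.volume_eq_prod, aemeasurable_indicator_iff hSmeas]
        exact (measurable_fst.aemeasurable.mul (hfst.mul aemeasurable_const)).ennreal_ofReal
      calc (∫⁻ q, ‖Set.indicator S f' q‖₊)
          ≤ ∫⁻ q, Set.indicator S B q := lintegral_mono hbound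
        _ = ∫⁻ r, ∫⁻ θ, Set.indicator S B (r, θ) := by
            rw [Measure.volume_eq_prod]
            exact MeasureTheory.lintegral_prod _ hBae
        _ ≤ ∫⁻ r, Set.indicator (Set.Ioo sx δ) (fun r => ENNReal.ofReal (C * h1 r)) r := by
            apply lintegral_mono
            intro r
            dsimp only
            by_cases hr : r ∈ Set.Ioo sx δ
            · have hr0 : 0 < r := hsx.trans hr.1
              have h01 : 0 ≤ sx / r := by positivity
              have hlt1 : sx / r < 1 := (div_lt_one hr0).mpr hr.1
              have hle2 : θ0 r ≤ π / 2 := Real.arccos_le_pi_div_two.mpr h01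
              have hθ0pos : 0 < θ0 r := Real.arccos_pos.mpr hlt1
              have hsin : Real.sin (θ0 r) = Real.sqrt (1 - (sx / r) ^ 2) :=
                Real.sin_arccos _
              have hs0 : 0 ≤ Real.sqrt (1 - (sx / r) ^ 2) := Real.sqrt_nonneg _
              have hJ0 : 0 ≤ Jδ r := hJnn _ hr0.le
              have hfun2 : (fun θ => Set.indicator S B (r, θ))
                  = Set.indicator (Set.Ioo (-θ0 r) (θ0 r))
                    (fun _ => ENNReal.ofReal (r * (Jδ r * (3 * δ ^ 2)))) := by
                funext θ
                by_cases hθ : θ ∈ Set.Ioo (-θ0 r) (θ0 r)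
                · rw [Set.indicator_of_mem ((hslice r hr θ).mpr hθ), Set.indicator_of_mem hθ]
                · rw [Set.indicator_of_notMem (fun hc => hθ ((hslice r hr θ).mp hc)),
                    Set.indicator_of_notMem hθ]
              rw [hfun2, lintegral_indicator measurableSet_Ioo, setLIntegral_const,
                Set.indicator_of_mem hr, Real.volume_Ioo]
              rw [← ENNReal.ofReal_mul (by positivity)]
              apply ENNReal.ofReal_le_ofReal
              have hθle : θ0 r ≤ π / 2 * Real.sin (θ0 r) := by
                have h2 : 2 / π * θ0 r ≤ Real.sin (θ0 r) :=
                  Real.mul_le_sin (Real.arccos_nonneg (sx / r)) hle2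
                have h3 := mul_le_mul_of_nonneg_left h2
                  (by positivity : (0:ℝ) ≤ π / 2)
                have hid : π / 2 * (2 / π * θ0 r) = θ0 r := by
                  field_simp
                linarith
              rw [hsin] at hθle
              have hCeq' : 3 * δ ^ 2 * π = C * sx ^ 2 := by
                rw [hCdef]; field_simp
              simp only [hh1def]
              have hx : sx * sx * r ≤ r * r * sx := by
                nlinarith [mul_nonneg (mul_nonneg hr0.le hsx.le) (sub_nonneg.mpr hr.1.le)]
              have h2θ : θ0 r - -θ0 r ≤ π * Real.sqrt (1 - (sx / r) ^ 2) := by linarith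
              have hp1 : r * (Jδ r * (3 * δ ^ 2)) * (θ0 r - -θ0 r)
                  ≤ r * (Jδ r * (3 * δ ^ 2)) * (π * Real.sqrt (1 - (sx / r) ^ 2)) :=
                mul_le_mul_of_nonneg_left h2θ (by positivity)
              refine hp1.trans ?_
              calc r * (Jδ r * (3 * δ ^ 2)) * (π * Real.sqrt (1 - (sx / r) ^ 2))
                  = C * (Jδ r * Real.sqrt (1 - (sx / r) ^ 2)) * (sx * sx * r) := by
                    linear_combination (Jδ r * Real.sqrt (1 - (sx / r) ^ 2) * r) * hCeq'
                _ ≤ C * (Jδ r * Real.sqrt (1 - (sx / r) ^ 2)) * (r * r * sx) :=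
                    mul_le_mul_of_nonneg_left hx (by positivity)
                _ = C * (Jδ r * r ^ 2 * Real.sqrt (1 - (sx / r) ^ 2) * sx) := by ring
            · have hz : ∀ θ : ℝ, Set.indicator S B (r, θ) = 0 := fun θ =>
                Set.indicator_of_notMem (hsliceE r hr θ) _
              rw [Set.indicator_of_notMem hr]
              simp [hz]
        _ = ∫⁻ r in Set.Ioo sx δ, ENNReal.ofReal (C * h1 r) :=
            lintegral_indicator measurableSet_Ioo _
        _ ≤ ∫⁻ r in Set.Ioo sx δ, ENNReal.ofReal C * ENNReal.ofReal (h1 r) := by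
            apply lintegral_mono
            intro r
            dsimp only
            rw [← ENNReal.ofReal_mul hC.le]
        _ = ENNReal.ofReal C * ∫⁻ r in Set.Ioo sx δ, ENNReal.ofReal (h1 r) :=
            lintegral_const_mul' _ _ ENNReal.ofReal_ne_top
        _ < ⊤ := by
            have hfin := hIoo.2
            have hb2 : (∫⁻ r in Set.Ioo sx δ, ENNReal.ofReal (h1 r))
                ≤ ∫⁻ r in Set.Ioo sx δ, (‖h1 r‖₊ : ℝ≥0∞) := by
              apply lintegral_mono
              intro r
              dsimp only
              rw [← enorm_eq_nnnorm, ← ofReal_norm]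
              exact ENNReal.ofReal_le_ofReal (le_abs_self _)
            exact ENNReal.mul_lt_top ENNReal.ofReal_lt_top (hb2.trans_lt hfin)
    rw [integral_undef hI, intervalIntegral.integral_undef hII, mul_zero]


set_option maxHeartbeats 1000000 in
/-- Equation (eqn:intT): the circular-segment integral of the rescaled kernel against
`I_δ(x,y) = |(y−x)·p|² − |(y−x̄)·n|² + |(x−x̄)·n|²`, where `x̄ = x + sₓ n`, reduces to a
one-dimensional radial integral and in particular is nonnegative. -/
theorem stmt_9 (J : ℝ → ℝ) (hJnonneg : ∀ r, 0 ≤ r → 0 ≤ J r)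
    (hJsupp : ∀ r, 1 < r → J r = 0)
    (c δ sx : ℝ) (hc : 0 < c) (hδ : 0 < δ) (hsx : 0 < sx) (hsxδ : sx < δ)
    (Jδ : ℝ → ℝ) (hJδ : ∀ r, Jδ r = c / δ ^ 4 * J (r / δ))
    (x : EuclideanSpace ℝ (Fin 2)) (n p : EuclideanSpace ℝ (Fin 2))
    (hn : ‖n‖ = 1) (hp : ‖p‖ = 1) (hnp : ⟪n, p⟫ = 0)
    (xbar : EuclideanSpace ℝ (Fin 2)) (hxbar : xbar = x + sx • n)
    (D : Set (EuclideanSpace ℝ (Fin 2)))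
    (hD : D = {y | dist y x < δ ∧ sx < ⟪y - x, n⟫}) :
    (∫ y in D, Jδ (dist x y) *
        (⟪y - x, p⟫ ^ 2 - ⟪y - xbar, n⟫ ^ 2 + ⟪x - xbar, n⟫ ^ 2)) =
      2 * ∫ r in sx..δ, Jδ r * r ^ 2 * Real.sqrt (1 - (sx / r) ^ 2) * sx ∧
    0 ≤ ∫ y in D, Jδ (dist x y) *
        (⟪y - x, p⟫ ^ 2 - ⟪y - xbar, n⟫ ^ 2 + ⟪x - xbar, n⟫ ^ 2) := by
  have hJδnn : ∀ r, 0 ≤ r → 0 ≤ Jδ r := by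
    intro r hr
    rw [hJδ]
    exact mul_nonneg (by positivity) (hJnonneg _ (by positivity))
  have hpn : ⟪p, n⟫ = 0 := by rw [real_inner_comm]; exact hnp
  have key : (∫ y in D, Jδ (dist x y) *
        (⟪y - x, p⟫ ^ 2 - ⟪y - xbar, n⟫ ^ 2 + ⟪x - xbar, n⟫ ^ 2)) =
      2 * ∫ r in sx..δ, Jδ r * r ^ 2 * Real.sqrt (1 - (sx / r) ^ 2) * sx := by
    have horth : Orthonormal ℝ ![n, p] := by
      rw [orthonormal_iff_ite]
      intro i j
      fin_cases i <;> fin_cases j <;>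
        simp only [Matrix.cons_val_zero, Matrix.cons_val_one, Matrix.head_cons,
          if_true, if_false, Fin.mk.injEq, zero_ne_one, one_ne_zero, reduceIte] <;>
        [skip; skip; skip; skip]
      · show ⟪n, n⟫ = 1
        rw [real_inner_self_eq_norm_sq, hn]; norm_num
      · show ⟪n, p⟫ = 0
        exact hnp
      · show ⟪p, n⟫ = 0
        exact hpn
      · show ⟪p, p⟫ = 1
        rw [real_inner_self_eq_norm_sq, hp]; norm_num
    have hspan : ⊤ ≤ Submodule.span ℝ (Set.range ![n, p]) := by
      apply le_of_eq
      symm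
      apply Submodule.eq_top_of_finrank_eq
      rw [finrank_span_eq_card horth.linearIndependent]
      simp [finrank_euclideanSpace_fin]
    set b : OrthonormalBasis (Fin 2) ℝ (EuclideanSpace ℝ (Fin 2)) :=
      OrthonormalBasis.mk horth hspan with hbdef
    have hb0 : b 0 = n := by simp [hbdef]
    have hb1 : b 1 = p := by simp [hbdef]
    set Ψ : (ℝ × ℝ) ≃ᵐ EuclideanSpace ℝ (Fin 2) :=
      (MeasurableEquiv.finTwoArrow (α := ℝ)).symm.trans
        (((MeasurableEquiv.toLp 2 (Fin 2 → ℝ)).symm.symm.trans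
          b.measurableEquiv.symm).trans (Homeomorph.addLeft x).toMeasurableEquiv) with hΨdef
    have hΨmp : MeasurePreserving Ψ volume volume := by
      have m1 : MeasurePreserving (MeasurableEquiv.finTwoArrow (α := ℝ)).symm volume volume :=
        (volume_preserving_finTwoArrow ℝ).symm
      have m2 : MeasurePreserving (MeasurableEquiv.toLp 2 (Fin 2 → ℝ)).symm.symm volume volume :=
        (EuclideanSpace.volume_preserving_symm_measurableEquiv_toLp (Fin 2)).symm
      have m3 : MeasurePreserving b.measurableEquiv.symm volume volume :=
        b.measurePreserving_measurableEquiv.symm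
      have m4 : MeasurePreserving (Homeomorph.addLeft x).toMeasurableEquiv volume volume :=
        measurePreserving_add_left volume x
      exact m4.comp (m3.comp (m2.comp m1))
    have hΨapp : ∀ q : ℝ × ℝ, Ψ q = x + (q.1 • n + q.2 • p) := by
      intro q
      have h0 : Ψ q = x + b.repr.symm
          ((MeasurableEquiv.toLp 2 (Fin 2 → ℝ)).symm.symm ![q.1, q.2]) := rfl
      rw [h0, ← b.sum_repr_symm, Fin.sum_univ_two]
      have e0 : ((MeasurableEquiv.toLp 2 (Fin 2 → ℝ)).symm.symm ![q.1, q.2]) 0 = q.1 := rfl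
      have e1 : ((MeasurableEquiv.toLp 2 (Fin 2 → ℝ)).symm.symm ![q.1, q.2]) 1 = q.2 := rfl
      rw [e0, e1, hb0, hb1]
    have hinn_n : ∀ q : ℝ × ℝ, ⟪q.1 • n + q.2 • p, n⟫ = q.1 := by
      intro q
      rw [inner_add_left, real_inner_smul_left, real_inner_smul_left,
        real_inner_self_eq_norm_sq, hn, hpn]
      ring
    have hinn_p : ∀ q : ℝ × ℝ, ⟪q.1 • n + q.2 • p, p⟫ = q.2 := by
      intro q
      rw [inner_add_left, real_inner_smul_left, real_inner_smul_left,
        real_inner_self_eq_norm_sq, hp, hnp]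
      ring
    have hnorm : ∀ q : ℝ × ℝ, ‖q.1 • n + q.2 • p‖ = Real.sqrt (q.1 ^ 2 + q.2 ^ 2) := by
      intro q
      rw [@norm_eq_sqrt_real_inner]
      congr 1
      rw [inner_add_right, real_inner_smul_right, real_inner_smul_right, hinn_n, hinn_p]
      ring
    have hmeasD' : MeasurableSet {q : ℝ × ℝ | Real.sqrt (q.1 ^ 2 + q.2 ^ 2) < δ ∧ sx < q.1} :=
      ((isOpen_lt (Real.continuous_sqrt.comp ((continuous_fst.pow 2).add
        (continuous_snd.pow 2))) continuous_const).inter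
        (isOpen_lt continuous_const continuous_fst)).measurableSet
    have hpre : Ψ ⁻¹' D = {q : ℝ × ℝ | Real.sqrt (q.1 ^ 2 + q.2 ^ 2) < δ ∧ sx < q.1} := by
      ext q
      simp only [Set.mem_preimage, hD, Set.mem_setOf_eq, hΨapp]
      rw [dist_eq_norm]
      have h1 : x + (q.1 • n + q.2 • p) - x = q.1 • n + q.2 • p := by abel
      rw [h1, hnorm, hinn_n]
    calc (∫ y in D, Jδ (dist x y) *
            (⟪y - x, p⟫ ^ 2 - ⟪y - xbar, n⟫ ^ 2 + ⟪x - xbar, n⟫ ^ 2))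
        = ∫ q in Ψ ⁻¹' D, Jδ (dist x (Ψ q)) *
            (⟪Ψ q - x, p⟫ ^ 2 - ⟪Ψ q - xbar, n⟫ ^ 2 + ⟪x - xbar, n⟫ ^ 2) :=
          (hΨmp.setIntegral_preimage_emb Ψ.measurableEmbedding _ _).symm
      _ = ∫ q in {q : ℝ × ℝ | Real.sqrt (q.1 ^ 2 + q.2 ^ 2) < δ ∧ sx < q.1},
            Jδ (Real.sqrt (q.1 ^ 2 + q.2 ^ 2)) * (q.2 ^ 2 - (q.1 - sx) ^ 2 + sx ^ 2) := by
          rw [hpre]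
          apply setIntegral_congr_fun hmeasD'
          intro q hq
          have h1 : Ψ q - x = q.1 • n + q.2 • p := by rw [hΨapp]; abel
          have h2 : Ψ q - xbar = (q.1 - sx) • n + q.2 • p := by
            rw [hΨapp, hxbar, sub_smul]; abel
          have h3 : x - xbar = (-sx) • n + (0:ℝ) • p := by
            rw [hxbar, zero_smul, add_zero, neg_smul]; abel
          have h5 : ⟪(q.1 - sx) • n + q.2 • p, n⟫ = q.1 - sx := hinn_n (q.1 - sx, q.2)
          have h6 : ⟪(-sx) • n + (0:ℝ) • p, n⟫ = -sx := hinn_n (-sx, 0)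
          dsimp only
          rw [dist_comm, dist_eq_norm, h1, h2, h3, hnorm, hinn_p, h5, h6, neg_sq]
      _ = 2 * ∫ r in sx..δ, Jδ r * r ^ 2 * Real.sqrt (1 - (sx / r) ^ 2) * sx :=
          plane_eq Jδ sx δ hsx hsxδ hJδnn
  refine ⟨key, ?_⟩
  rw [key]
  have hnn : 0 ≤ ∫ r in sx..δ, Jδ r * r ^ 2 * Real.sqrt (1 - (sx / r) ^ 2) * sx := by
    apply intervalIntegral.integral_nonneg hsxδ.le
    intro u hu
    have hu0 : 0 ≤ u := hsx.le.trans hu.1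
    have := hJδnn u hu0
    positivity
  linarith
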